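/- For $m \geq 2$, the integer solutions $(k_1,\dots,k_{m-1}) \in \mathbb{Z}^{m-1}$ of the equation $m\sum_{i=1}^{m-1} k_i^2 - (\sum_{i=1}^{m-1} k_i)^2 = m-1$ are exactly the $2m$ vectors $\pm e_1, \dots, \pm e_{m-1}, \pm(1,1,\dots,1)$, where $e_i$ denotes the $i$-th standard basis vector. -/
import Mathlib

set_option maxHeartbeats 1000000 in
/-- For `m ≥ 2`, the integer solutions of `m ∑ kᵢ² - (∑ kᵢ)² = m - 1` on `ℤ^{m-1}` are
exactly the `2m` vectors `± e₁, …, ± e_{m-1}, ±(1,…,1)`. -/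
theorem stmt1 (m : ℕ) (hm : 2 ≤ m) (k : Fin (m - 1) → ℤ) :
    (m : ℤ) * (∑ i, (k i) ^ 2) - (∑ i, k i) ^ 2 = (m : ℤ) - 1 ↔
      (∃ i, k = fun j => if j = i then 1 else 0) ∨
      (∃ i, k = fun j => if j = i then -1 else 0) ∨
      (k = fun _ => 1) ∨ (k = fun _ => -1) := by
  have hcard : (Finset.univ : Finset (Fin (m - 1))).card = m - 1 := by simp
  have hcardZ : ((m - 1 : ℕ) : ℤ) = (m : ℤ) - 1 := by
    push_cast [Nat.cast_sub (by omega : (1:ℕ) ≤ m)]; ring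
  constructor
  · intro heq
    -- Step 1: every coordinate is in {-1, 0, 1}
    have hval : ∀ t, k t = 1 ∨ k t = 0 ∨ k t = -1 := by
      intro t
      set T := ∑ j ∈ Finset.univ.erase t, k j with hT
      set R := ∑ j ∈ Finset.univ.erase t, (k j) ^ 2 with hR
      have hR0 : (0:ℤ) ≤ R := Finset.sum_nonneg fun j _ => sq_nonneg _
      have hcs0 : T ^ 2 ≤ ((Finset.univ.erase t).card : ℤ) * R :=
        sq_sum_le_card_mul_sum_sq
      have hce : ((Finset.univ.erase t).card : ℤ) = (m : ℤ) - 2 := by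
        rw [Finset.card_erase_of_mem (Finset.mem_univ t), hcard]
        push_cast [Nat.cast_sub (by omega : (1:ℕ) ≤ m - 1)]
        rw [hcardZ]; ring
      rw [hce] at hcs0
      have hSsplit : (∑ i, k i) = k t + T :=
        (Finset.add_sum_erase _ _ (Finset.mem_univ t)).symm
      have hQsplit : (∑ i, (k i) ^ 2) = (k t) ^ 2 + R :=
        (Finset.add_sum_erase _ _ (Finset.mem_univ t)).symm
      rw [hSsplit, hQsplit] at heq
      have hm2 : (2:ℤ) ≤ (m:ℤ) := by exact_mod_cast hm
      by_contra hc
      push_neg at hc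
      obtain ⟨h1, h2, h3⟩ := hc
      have h4 : 4 ≤ (k t) ^ 2 := by
        rcases (by omega : 2 ≤ k t ∨ k t ≤ -2) with h | h <;> nlinarith
      rcases eq_or_lt_of_le hm2 with hm2' | hm3
      · -- m = 2 : T = 0, R ≥ 0 kills it
        rw [← hm2'] at heq hcs0
        have hT0 : T = 0 := by nlinarith [sq_nonneg T]
        rw [hT0] at heq
        nlinarith
      · have heqm : ((m:ℤ) - 2) * ((m:ℤ) * ((k t) ^ 2 + R) - (k t + T) ^ 2)
            = ((m:ℤ) - 2) * ((m:ℤ) - 1) := by rw [heq]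
        nlinarith [sq_nonneg (2 * T - ((m:ℤ) - 2) * k t),
          mul_nonneg (by linarith : (0:ℤ) ≤ (m:ℤ)) (by linarith : (0:ℤ) ≤ ((m:ℤ) - 2) * R - T ^ 2),
          mul_nonneg (by linarith : (0:ℤ) ≤ (m:ℤ))
            (mul_nonneg (by linarith : (0:ℤ) ≤ (m:ℤ) - 2) (by linarith : (0:ℤ) ≤ (k t) ^ 2 - 4)),
          mul_pos (by linarith : (0:ℤ) < (m:ℤ) - 2) (by linarith : (0:ℤ) < (m:ℤ) + 1)]
    set S := ∑ i, k i with hS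
    set Q := ∑ i, (k i) ^ 2 with hQ
    -- basic facts about S and Q
    have hQle : Q ≤ (m : ℤ) - 1 := by
      calc Q ≤ ∑ _i : Fin (m-1), (1:ℤ) := Finset.sum_le_sum fun i _ => by
              rcases hval i with h | h | h <;> simp [h]
        _ = (m : ℤ) - 1 := by rw [Finset.sum_const, hcard]; simp [hcardZ]
    have hSleQ : S ≤ Q := Finset.sum_le_sum fun i _ => by
      rcases hval i with h | h | h <;> simp [h]
    have hnegSleQ : -Q ≤ S := by
      have : -S ≤ Q := by
        rw [hS, hQ, ← Finset.sum_neg_distrib]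
        exact Finset.sum_le_sum fun i _ => by rcases hval i with h | h | h <;> simp [h]
      linarith
    have hpar : Even (Q - S) := by
      rw [hQ, hS, ← Finset.sum_sub_distrib]
      apply Finset.even_sum
      intro i _
      have hring : (k i) ^ 2 - k i = (k i - 1) * ((k i - 1) + 1) := by ring
      rw [hring]
      exact Int.even_mul_succ_self _
    -- case analysis
    rcases eq_or_lt_of_le hSleQ with hsq | hslt
    · -- S = Q : all nonzero entries are +1
      have hQ1n : Q = 1 ∨ Q = (m:ℤ) - 1 := by
        have hfac : (Q - 1) * (Q - ((m:ℤ) - 1)) = 0 := by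
          linear_combination -heq - (Q + S) * hsq
        rcases mul_eq_zero.mp hfac with h | h
        · left; linarith
        · right; linarith
      rcases hQ1n with h1 | h1
      · -- Q = 1, S = 1 : k = e_i
        left
        have hex : ∃ i, k i ≠ 0 := by
          by_contra hcc
          push_neg at hcc
          have : Q = 0 := by
            rw [hQ]; exact Finset.sum_eq_zero fun i _ => by rw [hcc i]; ring
          omega
        obtain ⟨i, hi⟩ := hex
        have hki : (k i) ^ 2 = 1 := by
          rcases hval i with h | h | h
          · rw [h]; ring
          · exact absurd h hi
          · rw [h]; ring
        have hrest : ∀ j, j ≠ i → k j = 0 := by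
          have hz : ∑ j ∈ Finset.univ.erase i, (k j) ^ 2 = 0 := by
            have := (Finset.add_sum_erase Finset.univ (fun j => (k j) ^ 2)
              (Finset.mem_univ i)).symm
            rw [← hQ] at this; omega
          intro j hj
          have := (Finset.sum_eq_zero_iff_of_nonneg (fun j _ => sq_nonneg (k j))).mp hz j
            (Finset.mem_erase.mpr ⟨hj, Finset.mem_univ j⟩)
          exact pow_eq_zero_iff (by norm_num) |>.mp this
        have hSi : S = k i := by
          rw [hS, ← Finset.add_sum_erase Finset.univ k (Finset.mem_univ i),
            Finset.sum_eq_zero fun j hj => hrest j (Finset.mem_erase.mp hj).1]; ring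
        have hkival : k i = 1 := by omega
        exact ⟨i, funext fun j => by
          by_cases hji : j = i
          · simp [hji, hkival]
          · simp [hji, hrest j hji]⟩
      · -- Q = m - 1, S = m - 1 : all ones
        right; right; left
        have hz : ∑ i : Fin (m-1), (1 - k i) = 0 := by
          rw [Finset.sum_sub_distrib, ← hS, Finset.sum_const, hcard]
          simp only [nsmul_eq_mul, mul_one, hcardZ]; omega
        funext i
        have := (Finset.sum_eq_zero_iff_of_nonneg (fun i _ => by
          rcases hval i with h | h | h <;> omega)).mp hz i (Finset.mem_univ i)
        omega
    rcases eq_or_lt_of_le hnegSleQ with hsq | hslt2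
    · -- S = -Q
      have hQ1n : Q = 1 ∨ Q = (m:ℤ) - 1 := by
        have hfac : (Q - 1) * (Q - ((m:ℤ) - 1)) = 0 := by
          linear_combination -heq + (S - Q) * hsq
        rcases mul_eq_zero.mp hfac with h | h
        · left; linarith
        · right; linarith
      rcases hQ1n with h1 | h1
      · -- Q = 1, S = -1 : k = -e_i
        right; left
        have hex : ∃ i, k i ≠ 0 := by
          by_contra hcc
          push_neg at hcc
          have : Q = 0 := by
            rw [hQ]; exact Finset.sum_eq_zero fun i _ => by rw [hcc i]; ring
          omega
        obtain ⟨i, hi⟩ := hex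
        have hki : (k i) ^ 2 = 1 := by
          rcases hval i with h | h | h
          · rw [h]; ring
          · exact absurd h hi
          · rw [h]; ring
        have hrest : ∀ j, j ≠ i → k j = 0 := by
          have hz : ∑ j ∈ Finset.univ.erase i, (k j) ^ 2 = 0 := by
            have := (Finset.add_sum_erase Finset.univ (fun j => (k j) ^ 2)
              (Finset.mem_univ i)).symm
            rw [← hQ] at this; omega
          intro j hj
          have := (Finset.sum_eq_zero_iff_of_nonneg (fun j _ => sq_nonneg (k j))).mp hz j
            (Finset.mem_erase.mpr ⟨hj, Finset.mem_univ j⟩)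
          exact pow_eq_zero_iff (by norm_num) |>.mp this
        have hSi : S = k i := by
          rw [hS, ← Finset.add_sum_erase Finset.univ k (Finset.mem_univ i),
            Finset.sum_eq_zero fun j hj => hrest j (Finset.mem_erase.mp hj).1]; ring
        have hkival : k i = -1 := by omega
        exact ⟨i, funext fun j => by
          by_cases hji : j = i
          · simp [hji, hkival]
          · simp [hji, hrest j hji]⟩
      · -- all minus ones
        right; right; right
        have hz : ∑ i : Fin (m-1), (1 + k i) = 0 := by
          rw [Finset.sum_add_distrib, ← hS, Finset.sum_const, hcard]
          simp only [nsmul_eq_mul, mul_one, hcardZ]; omega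
        funext i
        have := (Finset.sum_eq_zero_iff_of_nonneg (fun i _ => by
          rcases hval i with h | h | h <;> omega)).mp hz i (Finset.mem_univ i)
        omega
    · -- mixed signs: impossible
      exfalso
      obtain ⟨c, hc⟩ := hpar
      have h1 : S ≤ Q - 2 := by omega
      have h2 : -(Q - 2) ≤ S := by omega
      have hQ2 : 2 ≤ Q := by omega
      have hS2 : S ^ 2 ≤ (Q - 2) ^ 2 := sq_le_sq' h2 h1
      nlinarith [mul_nonneg (by linarith : (0:ℤ) ≤ Q - 2)
        (by linarith : (0:ℤ) ≤ (m:ℤ) - 1 - Q)]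
  · -- converse: check the four families
    rintro (⟨i, rfl⟩ | ⟨i, rfl⟩ | rfl | rfl)
    · have h1 : (∑ j : Fin (m-1), if j = i then (1:ℤ) else 0) = 1 := by simp
      have h2 : (∑ j : Fin (m-1), (if j = i then (1:ℤ) else 0) ^ 2) = 1 := by
        have he : ∀ j : Fin (m-1), (if j = i then (1:ℤ) else 0) ^ 2
            = if j = i then 1 else 0 := fun j => by split <;> norm_num
        rw [Finset.sum_congr rfl fun j _ => he j]; simp
      rw [h1, h2]; ring
    · have h1 : (∑ j : Fin (m-1), if j = i then (-1:ℤ) else 0) = -1 := by simp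
      have h2 : (∑ j : Fin (m-1), (if j = i then (-1:ℤ) else 0) ^ 2) = 1 := by
        have he : ∀ j : Fin (m-1), (if j = i then (-1:ℤ) else 0) ^ 2
            = if j = i then 1 else 0 := fun j => by split <;> norm_num
        rw [Finset.sum_congr rfl fun j _ => he j]; simp
      rw [h1, h2]; ring
    · simp only [one_pow, Finset.sum_const, hcard, nsmul_eq_mul, mul_one, hcardZ]
      ring
    · simp only [Finset.sum_const, hcard, nsmul_eq_mul, hcardZ]
      ring
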